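/- Let n ≥ 1, let L be an n×n real matrix, and for h ∈ ℝ set D(h) = I − h·L. Then for all indices i ≠ j, as h → 0, the (i,j) entry of the adjugate matrix satisfies adj(D(h))[i,j] = −D(h)[i,j]·∏_{l ∉ {i,j}} D(h)[l,l] + Σ_{k ≠ i, k ≠ j} D(h)[i,k]·D(h)[k,j]·∏_{l ∉ {i,j,k}} D(h)[l,l] + O(h³). -/

import Mathlib

open Asymptotics Finset

section AuxAdjugate

variable {n : ℕ}

private lemma adj_expand (A : Matrix (Fin n) (Fin n) ℝ) (i j : Fin n) :
    A.adjugate i j = ∑ σ ∈ univ.filter (fun σ : Equiv.Perm (Fin n) => σ i = j),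
      ((Equiv.Perm.sign σ : ℤ) : ℝ) * ∏ l ∈ univ.erase i, A (σ l) l := by
  rw [Matrix.adjugate_apply, Matrix.det_apply]
  rw [← Finset.sum_filter_add_sum_filter_not univ (fun σ : Equiv.Perm (Fin n) => σ i = j)]
  have h2 : ∑ σ ∈ univ.filter (fun σ : Equiv.Perm (Fin n) => ¬ σ i = j),
      Equiv.Perm.sign σ • ∏ l, (A.updateRow j (Pi.single i 1)) (σ l) l = 0 := by
    apply Finset.sum_eq_zero
    intro σ hσ
    rw [Finset.mem_filter] at hσ
    have hzero : (A.updateRow j (Pi.single i 1)) (σ (σ⁻¹ j)) (σ⁻¹ j) = 0 := by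
      rw [← Equiv.Perm.mul_apply, mul_inv_cancel, Equiv.Perm.one_apply, Matrix.updateRow_apply, if_pos rfl]
      have : (σ⁻¹ j : Fin n) ≠ i := by
        intro e
        exact hσ.2 (by rw [← e, ← Equiv.Perm.mul_apply, mul_inv_cancel, Equiv.Perm.one_apply])
      exact Pi.single_eq_of_ne this _
    rw [Finset.prod_eq_zero (f := fun l => (A.updateRow j (Pi.single i 1)) (σ l) l)
      (Finset.mem_univ (σ⁻¹ j)) hzero, smul_zero]
  rw [h2, add_zero]
  apply Finset.sum_congr rfl
  intro σ hσ
  rw [Finset.mem_filter] at hσ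
  have hrow : (A.updateRow j (Pi.single i 1)) (σ i) i = 1 := by
    rw [hσ.2, Matrix.updateRow_apply, if_pos rfl, Pi.single_eq_same]
  rw [← Finset.mul_prod_erase univ _ (Finset.mem_univ i), hrow, one_mul]
  have hprod : ∏ l ∈ univ.erase i, (A.updateRow j (Pi.single i 1)) (σ l) l
      = ∏ l ∈ univ.erase i, A (σ l) l := by
    apply Finset.prod_congr rfl
    intro l hl
    have hl' : l ≠ i := (Finset.mem_erase.mp hl).1
    have : σ l ≠ j := fun e => hl' (σ.injective (e.trans hσ.2.symm))
    rw [Matrix.updateRow_apply, if_neg this]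
  rw [hprod, Units.smul_def, zsmul_eq_mul]

/-- The "good" permutations: for `k = j` this is the transposition `(i j)`, and for
`k ∉ {i, j}` the 3-cycle `i → j → k → i`. -/
private def perm3 (i j k : Fin n) : Equiv.Perm (Fin n) := Equiv.swap i j * Equiv.swap j k

private lemma perm3_apply_i {i j k : Fin n} (hij : i ≠ j) (hik : i ≠ k) :
    perm3 i j k i = j := by
  simp [perm3, Equiv.swap_apply_of_ne_of_ne hij hik, Equiv.swap_apply_left]

private lemma perm3_apply_j {i j k : Fin n} (hki : k ≠ i) (hkj : k ≠ j) :
    perm3 i j k j = k := by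
  simp [perm3, Equiv.swap_apply_left, Equiv.swap_apply_of_ne_of_ne hki hkj]

private lemma perm3_apply_jj {i j : Fin n} : perm3 i j j j = i := by
  simp [perm3, Equiv.swap_apply_right]

private lemma perm3_apply_k {i j k : Fin n} (hkj : k ≠ j) :
    perm3 i j k k = i := by
  simp [perm3, Equiv.swap_apply_right, Equiv.swap_apply_left]

private lemma perm3_apply_other {i j k x : Fin n} (hxi : x ≠ i) (hxj : x ≠ j) (hxk : x ≠ k) :
    perm3 i j k x = x := by
  simp [perm3, Equiv.swap_apply_of_ne_of_ne hxj hxk, Equiv.swap_apply_of_ne_of_ne hxi hxj]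

private lemma perm3_inj {i j : Fin n} (hij : i ≠ j) {k k' : Fin n}
    (h : perm3 i j k = perm3 i j k') : k = k' := by
  have h2 : Equiv.swap j k = Equiv.swap j k' := mul_left_cancel h
  have : Equiv.swap j k j = Equiv.swap j k' j := by rw [h2]
  simpa [Equiv.swap_apply_left] using this

private lemma filter2_eq (i j : Fin n) :
    univ.filter (fun l : Fin n => l ≠ i ∧ l ≠ j) = (univ.erase i).erase j := by
  ext l; simp only [mem_filter, mem_erase, mem_univ, true_and, and_true]; tauto

private lemma filter3_eq (i j k : Fin n) :
    univ.filter (fun l : Fin n => l ≠ i ∧ l ≠ j ∧ l ≠ k) = ((univ.erase i).erase j).erase k := by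
  ext l; simp only [mem_filter, mem_erase, mem_univ, true_and, and_true]; tauto

private lemma good_sum (A : Matrix (Fin n) (Fin n) ℝ) {i j : Fin n} (hij : i ≠ j) :
    ∑ k ∈ univ.erase i,
        ((Equiv.Perm.sign (perm3 i j k) : ℤ) : ℝ) * ∏ l ∈ univ.erase i, A (perm3 i j k l) l
    = -(A i j * ∏ l ∈ univ.filter (fun l => l ≠ i ∧ l ≠ j), A l l)
      + ∑ k ∈ univ.filter (fun k => k ≠ i ∧ k ≠ j), A i k * A k j *
          ∏ l ∈ univ.filter (fun l => l ≠ i ∧ l ≠ j ∧ l ≠ k), A l l := by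
  have hji : j ≠ i := hij.symm
  have hjmem : j ∈ univ.erase i := Finset.mem_erase.mpr ⟨hji, Finset.mem_univ j⟩
  rw [← Finset.add_sum_erase _ _ hjmem]
  have hterm1 : ((Equiv.Perm.sign (perm3 i j j) : ℤ) : ℝ) * ∏ l ∈ univ.erase i, A (perm3 i j j l) l
      = -(A i j * ∏ l ∈ univ.filter (fun l : Fin n => l ≠ i ∧ l ≠ j), A l l) := by
    rw [filter2_eq, ← Finset.mul_prod_erase _ _ hjmem, perm3_apply_jj]
    have hs : Equiv.Perm.sign (perm3 i j j) = -1 := by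
      simp [perm3, Equiv.swap_self, Equiv.Perm.sign_swap hij]
    have hp : ∏ l ∈ (univ.erase i).erase j, A (perm3 i j j l) l
        = ∏ l ∈ (univ.erase i).erase j, A l l := by
      apply Finset.prod_congr rfl; intro l hl
      have h1 : l ≠ j := (Finset.mem_erase.mp hl).1
      have h2 : l ≠ i := (Finset.mem_erase.mp (Finset.mem_erase.mp hl).2).1
      rw [perm3_apply_other h2 h1 h1]
    rw [hs, hp]; push_cast; ring
  have hterm2 : ∀ k ∈ univ.filter (fun k : Fin n => k ≠ i ∧ k ≠ j),
      ((Equiv.Perm.sign (perm3 i j k) : ℤ) : ℝ) * ∏ l ∈ univ.erase i, A (perm3 i j k l) l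
      = A i k * A k j * ∏ l ∈ univ.filter (fun l : Fin n => l ≠ i ∧ l ≠ j ∧ l ≠ k), A l l := by
    intro k hk
    obtain ⟨hki, hkj⟩ := (Finset.mem_filter.mp hk).2
    have hkmem : k ∈ (univ.erase i).erase j :=
      Finset.mem_erase.mpr ⟨hkj, Finset.mem_erase.mpr ⟨hki, Finset.mem_univ k⟩⟩
    have hsign : Equiv.Perm.sign (perm3 i j k) = 1 := by
      rw [perm3, Equiv.Perm.sign_mul, Equiv.Perm.sign_swap hij, Equiv.Perm.sign_swap hkj.symm]
      simp
    rw [hsign, filter3_eq, ← Finset.mul_prod_erase _ _ hjmem,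
        ← Finset.mul_prod_erase _ _ hkmem, perm3_apply_j hki hkj, perm3_apply_k hkj]
    have hp : ∏ l ∈ ((univ.erase i).erase j).erase k, A (perm3 i j k l) l
        = ∏ l ∈ ((univ.erase i).erase j).erase k, A l l := by
      apply Finset.prod_congr rfl; intro l hl
      have h1 : l ≠ k := (Finset.mem_erase.mp hl).1
      have h2 : l ≠ j := (Finset.mem_erase.mp (Finset.mem_erase.mp hl).2).1
      have h3 : l ≠ i :=
        (Finset.mem_erase.mp (Finset.mem_erase.mp (Finset.mem_erase.mp hl).2).2).1
      rw [perm3_apply_other h3 h2 h1]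
    rw [hp]; push_cast; ring
  rw [hterm1, Finset.sum_congr (filter2_eq i j).symm hterm2]

private lemma three_le_card {s : Finset (Fin n)} {a b c : Fin n} (ha : a ∈ s) (hb : b ∈ s)
    (hc : c ∈ s) (hab : a ≠ b) (hac : a ≠ c) (hbc : b ≠ c) : 3 ≤ s.card := by
  have hsub : ({a, b, c} : Finset (Fin n)) ⊆ s := by
    intro x hx; simp only [Finset.mem_insert, Finset.mem_singleton] at hx
    rcases hx with rfl | rfl | rfl <;> assumption
  calc 3 = ({a, b, c} : Finset (Fin n)).card := by
        rw [Finset.card_insert_of_notMem (by simp [hab, hac]),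
            Finset.card_insert_of_notMem (by simp [hbc]), Finset.card_singleton]
    _ ≤ s.card := Finset.card_le_card hsub

private lemma bad_card {i j : Fin n} (hij : i ≠ j) {σ : Equiv.Perm (Fin n)} (hσ : σ i = j)
    (hbad : ∀ k ∈ univ.erase i, σ ≠ perm3 i j k) :
    3 ≤ ((univ.erase i).filter (fun l => σ l ≠ l)).card := by
  by_contra hc
  set M := (univ.erase i).filter (fun l => σ l ≠ l) with hM
  have hmemM : ∀ x, x ∈ M ↔ x ≠ i ∧ σ x ≠ x := by
    intro x
    simp [hM, Finset.mem_filter, Finset.mem_erase]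
  have hσjj : σ j ≠ j := fun e => hij (σ.injective (hσ.trans e.symm))
  have hjM : j ∈ M := (hmemM j).mpr ⟨hij.symm, hσjj⟩
  by_cases hji : σ j = i
  · -- σ should be the transposition perm3 i j j
    have hfix : ∀ x, x ≠ i → x ≠ j → σ x = x := by
      intro x hxi hxj
      by_contra hmove
      have hxM : x ∈ M := (hmemM x).mpr ⟨hxi, hmove⟩
      have hyx : σ x ≠ x := hmove
      have hyi : σ x ≠ i := fun e => hxj (σ.injective (e.trans hji.symm))
      have hyj : σ x ≠ j := fun e => hxi (σ.injective (e.trans hσ.symm))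
      have hσy : σ (σ x) ≠ σ x := fun e => hyx (σ.injective e)
      have hyM : σ x ∈ M := (hmemM _).mpr ⟨hyi, hσy⟩
      exact hc (three_le_card hjM hxM hyM (Ne.symm hxj) (Ne.symm hyj) (Ne.symm hyx))
    apply hbad j (Finset.mem_erase.mpr ⟨hij.symm, Finset.mem_univ j⟩)
    ext x
    by_cases hxi : x = i
    · subst hxi; rw [hσ, perm3_apply_i hij hij]
    by_cases hxj : x = j
    · subst hxj; rw [hji, perm3_apply_jj]
    · rw [hfix x hxi hxj, perm3_apply_other hxi hxj hxj]
  · -- σ should be a 3-cycle perm3 i j k with k = σ j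
    set k := σ j with hk
    have hkj : k ≠ j := hσjj
    have hki : k ≠ i := hji
    have hσk : σ k ≠ k := fun e => hkj (σ.injective (hk ▸ e : σ k = σ j))
    have hkM : k ∈ M := (hmemM k).mpr ⟨hki, hσk⟩
    have hσki : σ k = i := by
      by_contra hyi
      have hyk : σ k ≠ k := hσk
      have hyj : σ k ≠ j := fun e => hki (σ.injective (e.trans hσ.symm))
      have hσy : σ (σ k) ≠ σ k := fun e => hyk (σ.injective e)
      have hyM : σ k ∈ M := (hmemM _).mpr ⟨hyi, hσy⟩
      exact hc (three_le_card hjM hkM hyM (Ne.symm hkj) (Ne.symm hyj) (Ne.symm hyk))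
    have hfix : ∀ x, x ≠ i → x ≠ j → x ≠ k → σ x = x := by
      intro x hxi hxj hxk
      by_contra hmove
      have hxM : x ∈ M := (hmemM x).mpr ⟨hxi, hmove⟩
      exact hc (three_le_card hjM hkM hxM (Ne.symm hkj) (Ne.symm hxj) (Ne.symm hxk))
    apply hbad k (Finset.mem_erase.mpr ⟨hki, Finset.mem_univ k⟩)
    ext x
    by_cases hxi : x = i
    · subst hxi; rw [hσ, perm3_apply_i hij (Ne.symm hki)]
    by_cases hxj : x = j
    · subst hxj; rw [← hk, perm3_apply_j hki hkj]
    by_cases hxk : x = k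
    · subst hxk; rw [hσki, perm3_apply_k hkj]
    · rw [hfix x hxi hxj hxk, perm3_apply_other hxi hxj hxk]

private lemma term_bigO (L : Matrix (Fin n) (Fin n) ℝ) (i : Fin n) (σ : Equiv.Perm (Fin n))
    (hm : 3 ≤ ((univ.erase i).filter (fun l => σ l ≠ l)).card) :
    (fun h : ℝ => ((Equiv.Perm.sign σ : ℤ) : ℝ) *
        ∏ l ∈ univ.erase i, (1 - h • L : Matrix (Fin n) (Fin n) ℝ) (σ l) l)
      =O[nhds (0 : ℝ)] fun h : ℝ => h ^ 3 := by
  set M := (univ.erase i).filter (fun l => σ l ≠ l) with hMdef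
  set m := M.card with hmdef
  set g : ℝ → ℝ := fun h => ((Equiv.Perm.sign σ : ℤ) : ℝ) * ((-1) ^ m * h ^ (m - 3) *
      (∏ l ∈ M, L (σ l) l) *
      ∏ l ∈ (univ.erase i).filter (fun l => ¬ σ l ≠ l), (1 - h * L l l)) with hgdef
  have key : ∀ h : ℝ, ((Equiv.Perm.sign σ : ℤ) : ℝ) *
      ∏ l ∈ univ.erase i, (1 - h • L : Matrix (Fin n) (Fin n) ℝ) (σ l) l = h ^ 3 * g h := by
    intro h
    rw [← Finset.prod_filter_mul_prod_filter_not (univ.erase i) (fun l => σ l ≠ l)]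
    have h1 : ∏ l ∈ M, (1 - h • L : Matrix (Fin n) (Fin n) ℝ) (σ l) l
        = (-1) ^ m * h ^ m * ∏ l ∈ M, L (σ l) l := by
      have : ∀ l ∈ M, (1 - h • L : Matrix (Fin n) (Fin n) ℝ) (σ l) l = (-h) * L (σ l) l := by
        intro l hl
        have hne : σ l ≠ l := (Finset.mem_filter.mp hl).2
        simp [Matrix.sub_apply, Matrix.smul_apply, Matrix.one_apply_ne hne, smul_eq_mul]
      rw [Finset.prod_congr rfl this, Finset.prod_mul_distrib, Finset.prod_const, neg_pow]
    have h2 : ∏ l ∈ (univ.erase i).filter (fun l => ¬ σ l ≠ l),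
        (1 - h • L : Matrix (Fin n) (Fin n) ℝ) (σ l) l
        = ∏ l ∈ (univ.erase i).filter (fun l => ¬ σ l ≠ l), (1 - h * L l l) := by
      apply Finset.prod_congr rfl
      intro l hl
      have heq : σ l = l := not_not.mp (Finset.mem_filter.mp hl).2
      rw [heq]
      simp [Matrix.sub_apply, Matrix.smul_apply, Matrix.one_apply_eq, smul_eq_mul]
    have hpow : h ^ m = h ^ 3 * h ^ (m - 3) := by
      rw [← pow_add]; congr 1; omega
    rw [h1, h2, hgdef, hpow]; ring
  have hcont : Continuous g := by
    apply Continuous.mul continuous_const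
    apply Continuous.mul
    · apply Continuous.mul
      · exact continuous_const.mul (continuous_pow _)
      · exact continuous_const
    · exact continuous_finset_prod _ fun l _ => by continuity
  have hg1 : g =O[nhds (0 : ℝ)] (fun _ : ℝ => (1 : ℝ)) :=
    (hcont.tendsto 0).isBigO_one ℝ
  have hmul := (isBigO_refl (fun h : ℝ => h ^ 3) (nhds (0 : ℝ))).mul hg1
  simp only [mul_one] at hmul
  exact (Filter.EventuallyEq.isBigO (Filter.Eventually.of_forall key)).trans hmul

end AuxAdjugate

theorem stmt_4 (n : ℕ) (hn : 1 ≤ n) (L : Matrix (Fin n) (Fin n) ℝ) (i j : Fin n)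
    (hij : i ≠ j) :
    (fun h : ℝ =>
        (1 - h • L : Matrix (Fin n) (Fin n) ℝ).adjugate i j -
          (-((1 - h • L : Matrix (Fin n) (Fin n) ℝ) i j *
              ∏ l ∈ univ.filter (fun l => l ≠ i ∧ l ≠ j),
                (1 - h • L : Matrix (Fin n) (Fin n) ℝ) l l) +
            ∑ k ∈ univ.filter (fun k => k ≠ i ∧ k ≠ j),
              (1 - h • L : Matrix (Fin n) (Fin n) ℝ) i k *
                (1 - h • L : Matrix (Fin n) (Fin n) ℝ) k j *
                ∏ l ∈ univ.filter (fun l => l ≠ i ∧ l ≠ j ∧ l ≠ k),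
                  (1 - h • L : Matrix (Fin n) (Fin n) ℝ) l l))
      =O[nhds (0 : ℝ)] fun h : ℝ => h ^ 3 := by
  classical
  set S := univ.filter (fun σ : Equiv.Perm (Fin n) => σ i = j) with hS
  set G := (univ.erase i).image (fun k => perm3 i j k) with hG
  have hGS : G ⊆ S := by
    intro σ hσ
    rw [hG, Finset.mem_image] at hσ
    obtain ⟨k, hk, rfl⟩ := hσ
    have hki : k ≠ i := (Finset.mem_erase.mp hk).1
    rw [hS, Finset.mem_filter]
    exact ⟨Finset.mem_univ _, perm3_apply_i hij (Ne.symm hki)⟩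
  have hkey : ∀ h : ℝ,
      (1 - h • L : Matrix (Fin n) (Fin n) ℝ).adjugate i j -
          (-((1 - h • L : Matrix (Fin n) (Fin n) ℝ) i j *
              ∏ l ∈ univ.filter (fun l => l ≠ i ∧ l ≠ j),
                (1 - h • L : Matrix (Fin n) (Fin n) ℝ) l l) +
            ∑ k ∈ univ.filter (fun k => k ≠ i ∧ k ≠ j),
              (1 - h • L : Matrix (Fin n) (Fin n) ℝ) i k *
                (1 - h • L : Matrix (Fin n) (Fin n) ℝ) k j *
                ∏ l ∈ univ.filter (fun l => l ≠ i ∧ l ≠ j ∧ l ≠ k),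
                  (1 - h • L : Matrix (Fin n) (Fin n) ℝ) l l)
      = ∑ σ ∈ S \ G, ((Equiv.Perm.sign σ : ℤ) : ℝ) *
          ∏ l ∈ univ.erase i, (1 - h • L : Matrix (Fin n) (Fin n) ℝ) (σ l) l := by
    intro h
    have e2 : ∑ σ ∈ G, ((Equiv.Perm.sign σ : ℤ) : ℝ) *
        ∏ l ∈ univ.erase i, (1 - h • L : Matrix (Fin n) (Fin n) ℝ) (σ l) l
        = -((1 - h • L : Matrix (Fin n) (Fin n) ℝ) i j *
              ∏ l ∈ univ.filter (fun l => l ≠ i ∧ l ≠ j),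
                (1 - h • L : Matrix (Fin n) (Fin n) ℝ) l l) +
            ∑ k ∈ univ.filter (fun k => k ≠ i ∧ k ≠ j),
              (1 - h • L : Matrix (Fin n) (Fin n) ℝ) i k *
                (1 - h • L : Matrix (Fin n) (Fin n) ℝ) k j *
                ∏ l ∈ univ.filter (fun l => l ≠ i ∧ l ≠ j ∧ l ≠ k),
                  (1 - h • L : Matrix (Fin n) (Fin n) ℝ) l l := by
      rw [hG, Finset.sum_image (fun x _ y _ hxy => perm3_inj hij hxy)]
      exact good_sum _ hij
    rw [adj_expand (1 - h • L) i j, ← hS, ← e2, ← Finset.sum_sdiff hGS]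
    ring
  refine (Filter.EventuallyEq.trans_isBigO (Filter.EventuallyEq.of_eq (funext hkey)) ?_)
  apply Asymptotics.IsBigO.fun_sum
  intro σ hσ
  rw [Finset.mem_sdiff] at hσ
  obtain ⟨hσS, hσG⟩ := hσ
  rw [hS, Finset.mem_filter] at hσS
  apply term_bigO L i σ
  apply bad_card hij hσS.2
  intro k hk he
  exact hσG (by rw [hG]; exact Finset.mem_image.mpr ⟨k, hk, he.symm⟩)
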